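/- arXiv:2403.04100 — 2 statements merged into one kernel-verified Lean document; each statement's English description precedes it below -/
import Mathlib

section
/- In any reduced form R of a matrix M obtained by left-to-right column additions, i = low(R_j) for some j if and only if rank M[i..n,1..j] − rank M[i+1..n,1..j] − rank M[i..n,1..j−1] + rank M[i+1..n,1..j−1] = 1. -/
/-- Left-to-right column addition over ℤ/2: add column `i` to column `j`. -/
def colAdd {n : ℕ} (M : Matrix (Fin n) (Fin n) (ZMod 2)) (i j : Fin n) :
    Matrix (Fin n) (Fin n) (ZMod 2) :=
  fun r c => if c = j then M r j + M r i else M r c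

/-- One step of left-to-right column reduction: add some column `i` to a
later column `j`. -/
def Step {n : ℕ} (M N : Matrix (Fin n) (Fin n) (ZMod 2)) : Prop :=
  ∃ i j : Fin n, i < j ∧ N = colAdd M i j

/-- `R` is obtained from `M` by a finite sequence of left-to-right column
additions. -/
def Reduces {n : ℕ} (M R : Matrix (Fin n) (Fin n) (ZMod 2)) : Prop :=
  Relation.ReflTransGen Step M R

/-- `i` is the lowest one (largest row index of a nonzero entry) of
column `j` of `R`. -/
def IsLow {n : ℕ} (R : Matrix (Fin n) (Fin n) (ZMod 2)) (i j : Fin n) : Prop :=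
  R i j ≠ 0 ∧ ∀ r, R r j ≠ 0 → r ≤ i

/-- A matrix is reduced if distinct nonzero columns have distinct lowest ones. -/
def Reduced {n : ℕ} (R : Matrix (Fin n) (Fin n) (ZMod 2)) : Prop :=
  ∀ i j j', IsLow R i j → IsLow R i j' → j = j'

/-- Rank over ℤ/2 of the lower-left submatrix of `M` consisting of the rows
with (0-based) index ≥ i and the first j columns (0-based index < j). -/
noncomputable def rankLL {n : ℕ} (M : Matrix (Fin n) (Fin n) (ZMod 2)) (i j : ℕ) : ℕ :=
  (M.submatrix (fun r : {r : Fin n // i ≤ r.val} => r.1)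
    (fun c : {c : Fin n // c.val < j} => c.1)).rank

open Matrix
open scoped Classical

/-- A column addition does not change the rank of any lower-left submatrix. -/
lemma rankLL_colAdd {n : ℕ} (M : Matrix (Fin n) (Fin n) (ZMod 2)) (i j : Fin n)
    (hij : i < j) (a b : ℕ) : rankLL (colAdd M i j) a b = rankLL M a b := by
  unfold rankLL
  by_cases hb : j.val < b
  · have hib : i.val < b := lt_trans hij hb
    have key : (colAdd M i j).submatrix
          (fun r : {r : Fin n // a ≤ r.val} => r.1)
          (fun c : {c : Fin n // c.val < b} => c.1)
        = (M.submatrix (fun r : {r : Fin n // a ≤ r.val} => r.1)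
            (fun c : {c : Fin n // c.val < b} => c.1))
          * Matrix.transvection (⟨i, hib⟩ : {c : Fin n // c.val < b}) ⟨j, hb⟩ (1 : ZMod 2) := by
      ext r c
      simp only [Matrix.transvection, Matrix.mul_add, Matrix.mul_one, Matrix.add_apply,
        Matrix.submatrix_apply, Matrix.mul_apply, Matrix.single, Matrix.of_apply,
        mul_ite, mul_one, mul_zero, ite_and, Finset.sum_ite_eq, Finset.mem_univ, if_true]
      by_cases hc : c = (⟨j, hb⟩ : {c : Fin n // c.val < b})
      · subst hc
        simp [colAdd, mul_add, Finset.sum_add_distrib, Matrix.one_apply, mul_ite,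
          Finset.sum_ite_eq, Finset.sum_ite_eq', add_comm]
      · have hcj : (c.1 : Fin n) ≠ j := fun h => hc (Subtype.ext h)
        have hne : (⟨j, hb⟩ : {c : Fin n // c.val < b}) ≠ c := fun h => hc h.symm
        simp [colAdd, hcj, hne, mul_add, Finset.sum_add_distrib, Matrix.one_apply, mul_ite,
          Finset.sum_ite_eq, Finset.sum_ite_eq']
    rw [key, Matrix.rank_mul_eq_left_of_isUnit_det]
    rw [Matrix.det_transvection_of_ne]
    · exact isUnit_one
    · intro h
      exact hij.ne (congrArg Subtype.val h)
  · congr 1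
    ext r c
    have hcj : (c.1 : Fin n) ≠ j := by
      intro h
      exact hb (h ▸ c.2)
    simp [colAdd, Matrix.submatrix_apply, hcj]

lemma rankLL_reduces {n : ℕ} {M R : Matrix (Fin n) (Fin n) (ZMod 2)}
    (h : Reduces M R) (a b : ℕ) : rankLL R a b = rankLL M a b := by
  induction h with
  | refl => rfl
  | tail _ hstep ih =>
    obtain ⟨i, j, hij, rfl⟩ := hstep
    rw [rankLL_colAdd _ _ _ hij, ih]

/-- Any nonzero entry of a column gives a lowest one of that column, at least as low. -/
lemma exists_isLow {n : ℕ} {R : Matrix (Fin n) (Fin n) (ZMod 2)} {c r : Fin n}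
    (h : R r c ≠ 0) : ∃ l, IsLow R l c ∧ r ≤ l := by
  set S := Finset.univ.filter (fun x : Fin n => R x c ≠ 0) with hS
  have hrS : r ∈ S := by simp [hS, h]
  have hne : S.Nonempty := ⟨r, hrS⟩
  refine ⟨S.max' hne, ⟨?_, ?_⟩, S.le_max' r hrS⟩
  · have := S.max'_mem hne; simpa [hS] using this
  · intro x hx; exact S.le_max' x (by simp [hS, hx])

/-- In a reduced matrix, the rank of a lower-left submatrix counts the columns
among the first `b` whose lowest one is in row `≥ a`. -/
lemma rankLL_eq_card {n : ℕ} (R : Matrix (Fin n) (Fin n) (ZMod 2)) (hR : Reduced R)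
    (a b : ℕ) :
    rankLL R a b = (Finset.univ.filter
      (fun c : Fin n => c.val < b ∧ ∃ l : Fin n, IsLow R l c ∧ a ≤ l.val)).card := by
  set P : Fin n → Prop := fun c => c.val < b ∧ ∃ l : Fin n, IsLow R l c ∧ a ≤ l.val with hP
  set v : {c : Fin n // P c} → ({r : Fin n // a ≤ r.val} → ZMod 2) :=
    fun c r => R r.1 c.1 with hv
  choose l hl hal using fun c : {c : Fin n // P c} => c.2.2
  -- chosen lows are distinct
  have hlinj : Function.Injective l := by
    intro c c' h
    have : c.1 = c'.1 := hR (l c) c.1 c'.1 (hl c) (h ▸ hl c')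
    exact Subtype.ext this
  -- linear independence of the selected columns
  have hli : LinearIndependent (ZMod 2) v := by
    rw [Fintype.linearIndependent_iff]
    intro g hg
    by_contra hex
    push_neg at hex
    obtain ⟨c0, hc0⟩ := hex
    set S := Finset.univ.filter (fun c : {c : Fin n // P c} => g c ≠ 0) with hSdef
    have hSne : S.Nonempty := ⟨c0, by simp [hSdef, hc0]⟩
    obtain ⟨cm, hcm, hmax⟩ := S.exists_max_image l hSne
    have hgcm : g cm ≠ 0 := by simpa [hSdef] using hcm
    have hval := congrFun hg ⟨l cm, hal cm⟩
    rw [Finset.sum_apply] at hval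
    have hsingle : ∑ c, (g c • v c) ⟨l cm, hal cm⟩ = g cm * R (l cm) cm.1 := by
      rw [Finset.sum_eq_single cm]
      · simp [hv, smul_eq_mul]
      · intro c _ hne
        by_cases hgc : g c = 0
        · simp [hv, hgc]
        · have hz : R (l cm) c.1 = 0 := by
            by_contra hz
            have hle : l cm ≤ l c := (hl c).2 _ hz
            have hlt : l c ≠ l cm := fun h => hne (hlinj h)
            have hle' : l c ≤ l cm := hmax c (by simp [hSdef, hgc])
            exact hlt (le_antisymm hle' hle)
          simp [hv, smul_eq_mul, hz]
      · intro h
        exact absurd (Finset.mem_univ cm) h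
    rw [hsingle] at hval
    have hRcm : R (l cm) cm.1 ≠ 0 := (hl cm).1
    exact hgcm (by
      rcases mul_eq_zero.mp hval with h | h
      · exact h
      · exact absurd h hRcm)
  -- the span of all columns equals the span of the selected columns
  set A := R.submatrix (fun r : {r : Fin n // a ≤ r.val} => r.1)
      (fun c : {c : Fin n // c.val < b} => c.1) with hA
  have hspan : Submodule.span (ZMod 2) (Set.range Aᵀ)
      = Submodule.span (ZMod 2) (Set.range v) := by
    apply le_antisymm
    · rw [Submodule.span_le]
      rintro _ ⟨c, rfl⟩
      by_cases hc : P c.1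
      · apply Submodule.subset_span
        exact ⟨⟨c.1, hc⟩, rfl⟩
      · have hz : Aᵀ c = 0 := by
          funext r
          by_contra hrz
          have hrz' : R r.1 c.1 ≠ 0 := by simpa [hA] using hrz
          obtain ⟨lo, hlo, hrlo⟩ := exists_isLow hrz'
          exact hc ⟨c.2, lo, hlo, le_trans r.2 hrlo⟩
        rw [hz]
        exact Submodule.zero_mem _
    · rw [Submodule.span_le]
      rintro _ ⟨c, rfl⟩
      apply Submodule.subset_span
      exact ⟨⟨c.1, c.2.1⟩, rfl⟩
  have : rankLL R a b = Module.finrank (ZMod 2)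
      (Submodule.span (ZMod 2) (Set.range v)) := by
    rw [rankLL, ← hA, Matrix.rank_eq_finrank_span_cols, show A.col = Aᵀ from rfl, hspan]
  rw [this, finrank_span_eq_card hli, Fintype.card_subtype]

/-- Adding the `j`-th column to the count. -/
lemma card_filter_succ {n : ℕ} (R : Matrix (Fin n) (Fin n) (ZMod 2)) (a : ℕ) (j : Fin n) :
    (Finset.univ.filter
      (fun c : Fin n => c.val < j.val + 1 ∧ ∃ l : Fin n, IsLow R l c ∧ a ≤ l.val)).card
    = (Finset.univ.filter
        (fun c : Fin n => c.val < j.val ∧ ∃ l : Fin n, IsLow R l c ∧ a ≤ l.val)).card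
      + (if ∃ l : Fin n, IsLow R l j ∧ a ≤ l.val then 1 else 0) := by
  by_cases hQ : ∃ l : Fin n, IsLow R l j ∧ a ≤ l.val
  · rw [if_pos hQ]
    have hins : (Finset.univ.filter
        (fun c : Fin n => c.val < j.val + 1 ∧ ∃ l : Fin n, IsLow R l c ∧ a ≤ l.val))
        = insert j (Finset.univ.filter
          (fun c : Fin n => c.val < j.val ∧ ∃ l : Fin n, IsLow R l c ∧ a ≤ l.val)) := by
      ext c
      simp only [Finset.mem_filter, Finset.mem_insert, Finset.mem_univ, true_and]
      constructor
      · rintro ⟨hlt, hq⟩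
        rcases Nat.lt_succ_iff_lt_or_eq.mp hlt with h | h
        · exact Or.inr ⟨h, hq⟩
        · exact Or.inl (Fin.ext h)
      · rintro (rfl | ⟨hlt, hq⟩)
        · exact ⟨Nat.lt_succ_self _, hQ⟩
        · exact ⟨Nat.lt_succ_of_lt hlt, hq⟩
    rw [hins, Finset.card_insert_of_notMem (by simp), Nat.add_comm]
  · rw [if_neg hQ]
    have hset : (Finset.univ.filter
        (fun c : Fin n => c.val < j.val + 1 ∧ ∃ l : Fin n, IsLow R l c ∧ a ≤ l.val))
        = (Finset.univ.filter
          (fun c : Fin n => c.val < j.val ∧ ∃ l : Fin n, IsLow R l c ∧ a ≤ l.val)) := by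
      ext c
      simp only [Finset.mem_filter, Finset.mem_univ, true_and]
      constructor
      · rintro ⟨hlt, hq⟩
        rcases Nat.lt_succ_iff_lt_or_eq.mp hlt with h | h
        · exact ⟨h, hq⟩
        · exact absurd hq (Fin.ext h ▸ hQ)
      · rintro ⟨hlt, hq⟩
        exact ⟨Nat.lt_succ_of_lt hlt, hq⟩
    rw [hset]
    rfl

/-- in any reduced form `R` of `M` obtained by left-to-right column
additions, `i = low(R_j)` iff
rank M[i..n,1..j] − rank M[i+1..n,1..j] − rank M[i..n,1..j−1] + rank M[i+1..n,1..j−1] = 1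
(written additively in ℕ; `rankLL M a b` is the rank of the rows with 0-based
index ≥ a and the first b columns). -/
theorem isLow_iff_rank_formula
    {n : ℕ} (M R : Matrix (Fin n) (Fin n) (ZMod 2))
    (hred : Reduces M R) (hR : Reduced R) (i j : Fin n) :
    IsLow R i j ↔
      rankLL M i.val (j.val + 1) + rankLL M (i.val + 1) j.val
        = rankLL M (i.val + 1) (j.val + 1) + rankLL M i.val j.val + 1 := by
  have hM : ∀ a b, rankLL M a b = rankLL R a b := fun a b => (rankLL_reduces hred a b).symm
  rw [hM, hM, hM, hM, rankLL_eq_card R hR, rankLL_eq_card R hR, rankLL_eq_card R hR,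
    rankLL_eq_card R hR, card_filter_succ R i.val j, card_filter_succ R (i.val + 1) j]
  have hQiff : IsLow R i j ↔
      ((∃ l : Fin n, IsLow R l j ∧ i.val ≤ l.val)
        ∧ ¬(∃ l : Fin n, IsLow R l j ∧ i.val + 1 ≤ l.val)) := by
    constructor
    · intro h
      refine ⟨⟨i, h, le_refl _⟩, ?_⟩
      rintro ⟨l, hl, hle⟩
      have : l ≤ i := h.2 l hl.1
      have : l.val ≤ i.val := this
      omega
    · rintro ⟨⟨l, hl, hle⟩, h2⟩
      have hli : l.val ≤ i.val := by
        by_contra hcon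
        exact h2 ⟨l, hl, by omega⟩
      have : l = i := Fin.ext (le_antisymm hli hle)
      exact this ▸ hl
  rw [hQiff]
  by_cases h1 : ∃ l : Fin n, IsLow R l j ∧ i.val ≤ l.val
  · by_cases h2 : ∃ l : Fin n, IsLow R l j ∧ i.val + 1 ≤ l.val
    · rw [if_pos h1, if_pos h2]
      exact iff_of_false (fun h => h.2 h2) (by omega)
    · rw [if_pos h1, if_neg h2]
      exact iff_of_true ⟨h1, h2⟩ (by omega)
  · have h2 : ¬ ∃ l : Fin n, IsLow R l j ∧ i.val + 1 ≤ l.val := by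
      rintro ⟨l, hl, hle⟩
      exact h1 ⟨l, hl, by omega⟩
    rw [if_neg h1, if_neg h2]
    exact iff_of_false (fun h => h1 h.1) (by omega)
end

section
/- Columns of a boundary matrix that reduce to zero do not affect the reduction of other columns: if R is a reduced form of M and Z is the set of columns j with R_j = 0, then the reduced form of the matrix M' obtained by zeroing out the columns in Z of M has the same nonzero columns as R. -/
/-- Upper unitriangular. -/
def UT {n : ℕ} (U : Matrix (Fin n) (Fin n) (ZMod 2)) : Prop :=
  (∀ i, U i i = 1) ∧ ∀ i j : Fin n, j < i → U i j = 0

lemma zmod2_eq_one {x : ZMod 2} (h : x ≠ 0) : x = 1 := by revert h; revert x; decide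

lemma mul_colAdd {n : ℕ} (A B : Matrix (Fin n) (Fin n) (ZMod 2)) (i j : Fin n) :
    A * colAdd B i j = colAdd (A * B) i j := by
  ext r c
  simp only [colAdd, Matrix.mul_apply]
  split_ifs with h
  · simp [mul_add, Finset.sum_add_distrib]
  · rfl

lemma colAdd_colAdd {n : ℕ} (U : Matrix (Fin n) (Fin n) (ZMod 2)) {i j : Fin n} (h : i ≠ j) :
    colAdd (colAdd U i j) i j = U := by
  ext r c
  simp only [colAdd]
  by_cases hc : c = j
  · subst hc
    simp only [if_true, if_neg h]
    have : U r i + U r i = 0 := CharTwo.add_self_eq_zero _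
    linear_combination this
  · simp [hc]

lemma UT_colAdd {n : ℕ} {U : Matrix (Fin n) (Fin n) (ZMod 2)} {i j : Fin n}
    (hij : i < j) (hU : UT U) : UT (colAdd U i j) := by
  constructor
  · intro k
    simp only [colAdd]
    split_ifs with h
    · subst h; rw [hU.1, hU.2 k i hij]; ring
    · exact hU.1 k
  · intro a b hba
    simp only [colAdd]
    split_ifs with h
    · subst h; rw [hU.2 a b hba, hU.2 a i (hij.trans hba)]; ring
    · exact hU.2 a b hba

lemma reduces_factor {n : ℕ} {M R : Matrix (Fin n) (Fin n) (ZMod 2)}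
    (h : Reduces M R) : ∃ U, UT U ∧ R = M * U := by
  induction h with
  | refl =>
      exact ⟨1, ⟨fun i => Matrix.one_apply_eq i,
        fun i j hji => Matrix.one_apply_ne (ne_of_gt hji)⟩, (Matrix.mul_one M).symm⟩
  | tail _ hstep ih =>
      obtain ⟨U, hU, rfl⟩ := ih
      obtain ⟨i, j, hij, rfl⟩ := hstep
      exact ⟨colAdd U i j, UT_colAdd hij hU, (mul_colAdd M U i j).symm⟩

/-- off-diagonal support -/
def osupp {n : ℕ} (U : Matrix (Fin n) (Fin n) (ZMod 2)) : Finset (Fin n × Fin n) :=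
  Finset.univ.filter (fun p => p.1 ≠ p.2 ∧ U p.1 p.2 ≠ 0)

lemma reduces_mul {n : ℕ} (A : Matrix (Fin n) (Fin n) (ZMod 2))
    (U : Matrix (Fin n) (Fin n) (ZMod 2)) (hU : UT U) : Reduces A (A * U) := by
  obtain ⟨m, hm⟩ : ∃ m, (osupp U).card ≤ m := ⟨_, le_refl _⟩
  induction m generalizing U with
  | zero =>
      have hempty : osupp U = ∅ := Finset.card_eq_zero.mp (Nat.le_zero.mp hm)
      have hU1 : U = 1 := by
        ext a b
        by_cases hab : a = b
        · subst hab; rw [hU.1, Matrix.one_apply_eq]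
        · rw [Matrix.one_apply_ne hab]
          by_contra hne
          have : (a, b) ∈ osupp U := by
            simp [osupp, hab, hne]
          rw [hempty] at this
          exact absurd this (Finset.notMem_empty _)
      rw [hU1, Matrix.mul_one]
      exact Relation.ReflTransGen.refl
  | succ m ih =>
      by_cases hempty : osupp U = ∅
      · exact ih U hU (by rw [hempty]; simp)
      · obtain ⟨p, hp, hmin⟩ := Finset.exists_min_image (osupp U) (fun p => p.1)
          (Finset.nonempty_of_ne_empty hempty)
        obtain ⟨hne, hval⟩ : p.1 ≠ p.2 ∧ U p.1 p.2 ≠ 0 := by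
          simpa [osupp] using hp
        set i := p.1
        set j := p.2
        have hij : i < j := by
          rcases lt_or_gt_of_ne hne with h | h
          · exact h
          · exact absurd (hU.2 i j h) hval
        -- column i of U is e_i
        have hcol : ∀ k, k ≠ i → U k i = 0 := by
          intro k hk
          rcases lt_or_gt_of_ne hk with h | h
          · by_contra hne'
            have hmem : ((k, i) : Fin n × Fin n) ∈ osupp U := by
              simp [osupp, ne_of_lt h, hne']
            have := hmin _ hmem
            simp only at this
            exact absurd (lt_of_lt_of_le h this) (lt_irrefl _)
          · exact hU.2 k i h
        set V := colAdd U i j with hV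
        have hUV : U = colAdd V i j := (colAdd_colAdd U (ne_of_lt hij)).symm
        have hUTV : UT V := UT_colAdd hij hU
        have hsub : osupp V ⊆ (osupp U).erase (i, j) := by
          intro q hq
          obtain ⟨hq1, hq2⟩ : q.1 ≠ q.2 ∧ V q.1 q.2 ≠ 0 := by simpa [osupp] using hq
          by_cases hb : q.2 = j
          · by_cases ha : q.1 = i
            · exfalso
              apply hq2
              rw [hV, ha, hb]
              simp only [colAdd, if_pos rfl]
              rw [zmod2_eq_one hval, hU.1]
              decide
            · have hVq : V q.1 q.2 = U q.1 q.2 := by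
                rw [hV]; simp only [colAdd, if_pos hb, hcol q.1 ha, hb]; simp
              rw [Finset.mem_erase]
              refine ⟨by simp [Prod.ext_iff, ha], ?_⟩
              simp [osupp, hq1]
              rw [← hVq]; exact hq2
          · have hVq : V q.1 q.2 = U q.1 q.2 := by
              rw [hV]; simp only [colAdd, if_neg hb]
            rw [Finset.mem_erase]
            refine ⟨by simp [Prod.ext_iff, hb], ?_⟩
            simp [osupp, hq1]
            rw [← hVq]; exact hq2
        have hcard : (osupp V).card ≤ m := by
          have h1 := Finset.card_le_card hsub
          have h2 : ((osupp U).erase (i, j)).card = (osupp U).card - 1 :=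
            Finset.card_erase_of_mem hp
          omega
        have hred : Reduces A (A * V) := ih V hUTV hcard
        have hstep : Step (A * V) (A * U) := by
          refine ⟨i, j, hij, ?_⟩
          rw [hUV, mul_colAdd]
        exact Relation.ReflTransGen.tail hred hstep

/-- Each zero-bound column of `M` is a combination of strictly earlier columns of `M'`. -/
lemma exists_col {n : ℕ} (M M' U : Matrix (Fin n) (Fin n) (ZMod 2)) (hU : UT U)
    (Z : Set (Fin n))
    (hZcol : ∀ j ∈ Z, ∀ r, (M * U) r j = 0)
    (hM'n : ∀ r c, c ∉ Z → M' r c = M r c) :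
    ∀ i : Fin n, i ∈ Z → ∃ v : Fin n → ZMod 2,
      (∀ k, ¬ k < i → v k = 0) ∧ ∀ r, M r i = ∑ k, M' r k * v k := by
  have main : ∀ m : ℕ, ∀ i : Fin n, (i : ℕ) < m → i ∈ Z → ∃ v : Fin n → ZMod 2,
      (∀ k, ¬ k < i → v k = 0) ∧ ∀ r, M r i = ∑ k, M' r k * v k := by
    intro m
    induction m with
    | zero => intro i hi; omega
    | succ m ih =>
        intro i him hiZ
        -- M r i = ∑_{k < i} U k i * M r k
        have hexp : ∀ r, M r i = ∑ k ∈ Finset.univ.filter (· < i), U k i * M r k := by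
          intro r
          have h0 := hZcol i hiZ r
          rw [Matrix.mul_apply] at h0
          have hsplit : ∑ k, M r k * U k i
              = M r i * U i i + ∑ k ∈ Finset.univ.filter (· < i), M r k * U k i := by
            rw [← Finset.sum_filter_add_sum_filter_not Finset.univ (· < i) (fun k => M r k * U k i)]
            rw [add_comm]
            congr 1
            rw [← Finset.add_sum_erase _ _ (by simp : i ∈ Finset.univ.filter (¬ · < i))]
            have : ∀ k ∈ (Finset.univ.filter (¬ · < i)).erase i, M r k * U k i = 0 := by
              intro k hk
              rw [Finset.mem_erase, Finset.mem_filter] at hk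
              have : i < k := lt_of_le_of_ne (not_lt.mp hk.2.2) (Ne.symm hk.1)
              rw [hU.2 k i this, mul_zero]
            rw [Finset.sum_eq_zero this, add_zero]
          rw [hsplit, hU.1, mul_one] at h0
          have : M r i = ∑ k ∈ Finset.univ.filter (· < i), M r k * U k i := by
            exact (CharTwo.add_eq_iff_eq_add.mp h0).trans (zero_add _)
          rw [this]
          exact Finset.sum_congr rfl (fun k _ => mul_comm _ _)
        -- choice of expression for each earlier column
        have hch : ∀ k : Fin n, k < i → ∃ w : Fin n → ZMod 2,
            (∀ k', ¬ k' < i → w k' = 0) ∧ (k ∈ Z → w k = 0) ∧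
            ∀ r, M r k = ∑ k', M' r k' * w k' := by
          intro k hk
          by_cases hkZ : k ∈ Z
          · obtain ⟨w, hw1, hw2⟩ := ih k (by omega) hkZ
            exact ⟨w, fun k' hk' => hw1 k' (fun h => hk' (h.trans hk)),
              fun _ => hw1 k (lt_irrefl k), hw2⟩
          · refine ⟨fun k' => if k' = k then 1 else 0, ?_, fun h => absurd h hkZ, ?_⟩
            · intro k' hk'
              simp only
              rw [if_neg]
              rintro rfl
              exact hk' hk
            · intro r
              rw [Finset.sum_eq_single k (by intro b _ hb; simp only; rw [if_neg hb, mul_zero])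
                (by simp)]
              have hb : (fun k' => if k' = k then (1:ZMod 2) else 0) k = 1 := if_pos rfl
              rw [hb, mul_one, hM'n r k hkZ]
        choose w hw1 _ hw3 using hch
        refine ⟨fun c => ∑ k ∈ (Finset.univ.filter (· < i)).attach,
          U k.1 i * w k.1 (Finset.mem_filter.mp k.2).2 c, ?_, ?_⟩
        · intro k hk
          apply Finset.sum_eq_zero
          intro x _
          rw [hw1 _ _ k hk, mul_zero]
        · intro r
          rw [hexp r]
          simp only [Finset.mul_sum]
          rw [Finset.sum_comm]
          rw [← Finset.sum_attach (Finset.univ.filter (· < i)) (fun k => U k i * M r k)]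
          apply Finset.sum_congr rfl
          intro x _
          rw [hw3 x.1 (Finset.mem_filter.mp x.2).2 r, Finset.mul_sum]
          apply Finset.sum_congr rfl
          intro k _
          ring
  intro i hiZ
  exact main (i + 1) i (by omega) hiZ

/-- columns that reduce to zero do not affect the reduction of
other columns.  If `R` is a reduced form of `M` and `Z` is the set of column
indices with `R_j = 0`, then the matrix `M'` obtained by zeroing out the
columns of `M` in `Z` also reduces (by left-to-right column additions) to `R`;
in particular its reduced form has the same nonzero columns as `R`. -/
theorem zero_columns_do_not_affect
    {n : ℕ} (M R : Matrix (Fin n) (Fin n) (ZMod 2))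
    (hred : Reduces M R) (hR : Reduced R)
    (Z : Set (Fin n)) (hZ : Z = {j : Fin n | ∀ r, R r j = 0})
    (M' : Matrix (Fin n) (Fin n) (ZMod 2))
    (hM'z : ∀ r c, c ∈ Z → M' r c = 0)
    (hM'n : ∀ r c, c ∉ Z → M' r c = M r c) :
    Reduces M' R := by
  classical
  obtain ⟨U, hU, hRU⟩ := reduces_factor hred
  have hZcol : ∀ j ∈ Z, ∀ r, (M * U) r j = 0 := by
    intro j hj r
    rw [← hRU]
    rw [hZ] at hj
    exact hj r
  have hcols := exists_col M M' U hU Z hZcol hM'n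
  -- choice: for every k, a vector expressing column k of M via M'
  set ch : Fin n → Fin n → ZMod 2 := fun k =>
    if hk : k ∈ Z then (hcols k hk).choose else (fun k' => if k' = k then 1 else 0)
    with hch
  have ch_supp : ∀ k k', k < k' → ch k k' = 0 := by
    intro k k' hkk
    rw [hch]
    by_cases hk : k ∈ Z
    · simp only [dif_pos hk]
      exact (hcols k hk).choose_spec.1 k' (not_lt.mpr hkk.le)
    · simp only [dif_neg hk]
      rw [if_neg (ne_of_gt hkk)]
  have ch_diagZ : ∀ k, k ∈ Z → ch k k = 0 := by
    intro k hk
    rw [hch]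
    simp only [dif_pos hk]
    exact (hcols k hk).choose_spec.1 k (lt_irrefl k)
  have ch_diagN : ∀ k, k ∉ Z → ch k k = 1 := by
    intro k hk
    rw [hch]
    simp [dif_neg hk]
  have ch_eq : ∀ k r, M r k = ∑ k', M' r k' * ch k k' := by
    intro k r
    rw [hch]
    by_cases hk : k ∈ Z
    · simp only [dif_pos hk]
      exact (hcols k hk).choose_spec.2 r
    · simp only [dif_neg hk]
      rw [Finset.sum_eq_single k
        (by intro b _ hb
            have hb' : (if b = k then (1:ZMod 2) else 0) = 0 := if_neg hb
            rw [hb', mul_zero])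
        (by simp)]
      rw [if_pos rfl, mul_one, hM'n r k hk]
  -- the new unitriangular matrix
  set U' : Matrix (Fin n) (Fin n) (ZMod 2) := fun k j =>
    if j ∈ Z then (if k = j then 1 else 0) else ∑ k', U k' j * ch k' k
    with hU'
  have hUTU' : UT U' := by
    constructor
    · intro j
      rw [hU']
      by_cases hj : j ∈ Z
      · simp [hj]
      · simp only [if_neg hj]
        rw [Finset.sum_eq_single j]
        · rw [hU.1, ch_diagN j hj, one_mul]
        · intro b _ hb
          rcases lt_or_gt_of_ne hb with h | h
          · rw [ch_supp b j h, mul_zero]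
          · rw [hU.2 b j h, zero_mul]
        · simp
    · intro k j hjk
      rw [hU']
      by_cases hj : j ∈ Z
      · simp [hj, ne_of_gt hjk]
      · simp only [if_neg hj]
        apply Finset.sum_eq_zero
        intro b _
        rcases le_or_gt b j with h | h
        · rw [ch_supp b k (lt_of_le_of_lt h hjk), mul_zero]
        · rw [hU.2 b j h, zero_mul]
  have hmul : M' * U' = R := by
    ext r j
    rw [Matrix.mul_apply, hU']
    by_cases hj : j ∈ Z
    · simp only [if_pos hj]
      rw [Finset.sum_eq_single j
        (by intro b _ hb; rw [if_neg hb, mul_zero]) (by simp)]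
      rw [if_pos rfl, mul_one, hM'z r j hj]
      rw [hZ] at hj
      exact (hj r).symm
    · simp only [if_neg hj]
      have : ∑ k, M' r k * ∑ k', U k' j * ch k' k
          = ∑ k', U k' j * ∑ k, M' r k * ch k' k := by
        simp only [Finset.mul_sum]
        rw [Finset.sum_comm]
        apply Finset.sum_congr rfl
        intro k' _
        apply Finset.sum_congr rfl
        intro k _
        ring
      rw [this]
      have : ∑ k', U k' j * ∑ k, M' r k * ch k' k = ∑ k', U k' j * M r k' := by
        apply Finset.sum_congr rfl
        intro k' _
        rw [← ch_eq k' r]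
      rw [this, hRU, Matrix.mul_apply]
      exact Finset.sum_congr rfl (fun k _ => mul_comm _ _)
  have := reduces_mul M' U' hUTU'
  rwa [hmul] at this
end
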